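/- Let μ be a finite positive Radon measure on E satisfying Hypothesis 2.2 and let ρ ∈ BV(H,H₁) be nonnegative. Suppose (‖dρ‖, σ_ρ) and (‖dρ‖′, σ_ρ′) are two pairs, each consisting of a positive finite Borel measure on E and a Borel map E → H₁* of H₁*-norm one a.e. with respect to the corresponding measure, both satisfying ∫_E D*G(z) ρ(z) μ(dz) = ∫_E {}_{H₁}⟨G(z), σ(z)⟩_{H₁*} m(dz) for all G ∈ (𝓕C_b¹)_{Q^{1/2}(H)∩H₁}. Then ‖dρ‖ = ‖dρ‖′ and σ_ρ(z) = σ_ρ′(z) for ‖dρ‖-a.e. z. -/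

import Mathlib

open MeasureTheory Filter
open scoped RealInnerProductSpace ENNReal NNReal

noncomputable section

def FCb1 (E : Type*) [NormedAddCommGroup E] [NormedSpace ℝ E] : Set (E → ℝ) :=
  {u | ∃ (m : ℕ) (l : Fin m → (E →L[ℝ] ℝ)) (f : (Fin m → ℝ) → ℝ),
      ContDiff ℝ 1 f ∧ (∃ C, ∀ x, |f x| ≤ C) ∧ (∃ C, ∀ x, ‖fderiv ℝ f x‖ ≤ C) ∧
      ∀ z, u z = f fun i => l i z}

def dirDeriv {E : Type*} [NormedAddCommGroup E] [NormedSpace ℝ E]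
    (u : E → ℝ) (v : E) (z : E) : ℝ :=
  deriv (fun s : ℝ => u (z + s • v)) 0

variable {E : Type*} [NormedAddCommGroup E] [NormedSpace ℝ E]

lemma fcb1_const (r : ℝ) : (fun _ : E => r) ∈ FCb1 E := by
  refine ⟨0, Fin.elim0, fun _ => r, contDiff_const, ⟨|r|, fun x => le_rfl⟩, ⟨0, fun x => ?_⟩,
    fun z => rfl⟩
  simp [fderiv_const]

lemma fcb1_continuous {u : E → ℝ} (hu : u ∈ FCb1 E) : Continuous u := by
  obtain ⟨m, l, f, hf, -, -, hrep⟩ := hu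
  have : u = fun z => f fun i => l i z := funext hrep
  rw [this]
  exact hf.continuous.comp (continuous_pi fun i => (l i).continuous)

lemma fcb1_bounded {u : E → ℝ} (hu : u ∈ FCb1 E) : ∃ C, ∀ z, |u z| ≤ C := by
  obtain ⟨m, l, f, hf, ⟨C, hC⟩, -, hrep⟩ := hu
  exact ⟨C, fun z => by rw [hrep]; exact hC _⟩

/-- directional derivative data for a cylinder function -/
lemma fcb1_hasDerivAt {u : E → ℝ} (hu : u ∈ FCb1 E) :
    ∃ D : E → E → ℝ,
      (∀ v z, HasDerivAt (fun s : ℝ => u (z + s • v)) (D v z) 0) ∧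
      (∀ v, Continuous (D v)) ∧ (∀ v, ∃ C, ∀ z, |D v z| ≤ C) := by
  obtain ⟨m, l, f, hf, -, ⟨C', hC'⟩, hrep⟩ := hu
  refine ⟨fun v z => fderiv ℝ f (fun i => l i z) (fun i => l i v), fun v z => ?_, fun v => ?_,
    fun v => ⟨C' * ‖fun i => l i v‖, fun z => ?_⟩⟩
  · have hφ : HasDerivAt (fun s : ℝ => (fun i => l i z + s * l i v : Fin m → ℝ))
        (fun i => l i v) 0 :=
      hasDerivAt_pi.2 fun i => by
        simpa using (hasDerivAt_mul_const (l i v)).const_add (l i z)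
    have h0 : (fun i => l i z + (0:ℝ) * l i v) = fun i => l i z := by
      funext i; simp
    have hfd : HasFDerivAt f (fderiv ℝ f (fun i => l i z))
        (fun i => l i z + (0:ℝ) * l i v) := by
      rw [h0]; exact (hf.differentiable one_ne_zero _).hasFDerivAt
    have hcomp := hfd.comp_hasDerivAt (0:ℝ) hφ
    have heq : (fun s : ℝ => u (z + s • v)) = fun s => f (fun i => l i z + s * l i v) := by
      funext s; rw [hrep]; congr 1; funext i; simp [smul_eq_mul]
    rw [heq]
    exact hcomp
  · have hcf : Continuous fun z : E => fderiv ℝ f (fun i => l i z) :=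
      (hf.continuous_fderiv one_ne_zero).comp (continuous_pi fun i => (l i).continuous)
    exact hcf.clm_apply continuous_const
  · calc |fderiv ℝ f (fun i => l i z) (fun i => l i v)|
        ≤ ‖fderiv ℝ f (fun i => l i z)‖ * ‖fun i => l i v‖ :=
          (fderiv ℝ f (fun i => l i z)).le_opNorm _
      _ ≤ C' * ‖fun i => l i v‖ := by
          have : (0:ℝ) ≤ ‖fun i => l i v‖ := norm_nonneg _
          exact mul_le_mul_of_nonneg_right (hC' _) this

lemma dirDeriv_eq_of_hasDerivAt {u : E → ℝ} {v z : E} {d : ℝ}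
    (h : HasDerivAt (fun s : ℝ => u (z + s • v)) d 0) : dirDeriv u v z = d :=
  h.deriv

end
noncomputable section two
variable {E : Type*} [NormedAddCommGroup E] [NormedSpace ℝ E]

lemma fcb1_mul {u w : E → ℝ} (hu : u ∈ FCb1 E) (hw : w ∈ FCb1 E) :
    (fun z => u z * w z) ∈ FCb1 E := by
  obtain ⟨mu, lu, f, hf, ⟨Cf, hCf⟩, ⟨Cf', hCf'⟩, hfrep⟩ := hu
  obtain ⟨mw, lw, g, hg, ⟨Cg, hCg⟩, ⟨Cg', hCg'⟩, hgrep⟩ := hw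
  classical
  set A : ((Fin (mu + mw) → ℝ)) →L[ℝ] (Fin mu → ℝ) :=
    ContinuousLinearMap.pi fun i => ContinuousLinearMap.proj (R := ℝ)
      (φ := fun _ : Fin (mu+mw) => ℝ) (Fin.castAdd mw i)
  set B : ((Fin (mu + mw) → ℝ)) →L[ℝ] (Fin mw → ℝ) :=
    ContinuousLinearMap.pi fun i => ContinuousLinearMap.proj (R := ℝ)
      (φ := fun _ : Fin (mu+mw) => ℝ) (Fin.natAdd mu i)
  set F : (Fin (mu + mw) → ℝ) → ℝ := fun x => f (A x) * g (B x)
  have hdf : Differentiable ℝ (fun x => f (A x)) :=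
    (hf.differentiable one_ne_zero).comp A.differentiable
  have hdg : Differentiable ℝ (fun x => g (B x)) :=
    (hg.differentiable one_ne_zero).comp B.differentiable
  have hCf0 : 0 ≤ Cf := le_trans (abs_nonneg _) (hCf 0)
  have hCg0 : 0 ≤ Cg := le_trans (abs_nonneg _) (hCg 0)
  have hfdA : ∀ x, ‖fderiv ℝ (fun y => f (A y)) x‖ ≤ Cf' * ‖A‖ := by
    intro x
    have : fderiv ℝ (fun y => f (A y)) x = (fderiv ℝ f (A x)).comp A := by
      have h := fderiv_comp x ((hf.differentiable one_ne_zero) (A x)) A.differentiableAt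
      rw [A.fderiv] at h
      exact h
    rw [this]
    calc ‖(fderiv ℝ f (A x)).comp A‖ ≤ ‖fderiv ℝ f (A x)‖ * ‖A‖ :=
          ContinuousLinearMap.opNorm_comp_le _ _
      _ ≤ Cf' * ‖A‖ := mul_le_mul_of_nonneg_right (hCf' _) (norm_nonneg _)
  have hgdB : ∀ x, ‖fderiv ℝ (fun y => g (B y)) x‖ ≤ Cg' * ‖B‖ := by
    intro x
    have : fderiv ℝ (fun y => g (B y)) x = (fderiv ℝ g (B x)).comp B := by
      have h := fderiv_comp x ((hg.differentiable one_ne_zero) (B x)) B.differentiableAt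
      rw [B.fderiv] at h
      exact h
    rw [this]
    calc ‖(fderiv ℝ g (B x)).comp B‖ ≤ ‖fderiv ℝ g (B x)‖ * ‖B‖ :=
          ContinuousLinearMap.opNorm_comp_le _ _
      _ ≤ Cg' * ‖B‖ := mul_le_mul_of_nonneg_right (hCg' _) (norm_nonneg _)
  refine ⟨mu + mw, Fin.append lu lw, F,
    ((hf.comp A.contDiff).mul (hg.comp B.contDiff)), ⟨Cf * Cg, fun x => ?_⟩,
    ⟨Cf * (Cg' * ‖B‖) + Cg * (Cf' * ‖A‖), fun x => ?_⟩, fun z => ?_⟩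
  · rw [abs_mul]
    exact mul_le_mul (hCf _) (hCg _) (abs_nonneg _) hCf0
  · have : fderiv ℝ F x
        = f (A x) • fderiv ℝ (fun y => g (B y)) x + g (B x) • fderiv ℝ (fun y => f (A y)) x :=
      fderiv_mul (hdf x) (hdg x)
    rw [this]
    calc ‖f (A x) • fderiv ℝ (fun y => g (B y)) x + g (B x) • fderiv ℝ (fun y => f (A y)) x‖
        ≤ ‖f (A x) • fderiv ℝ (fun y => g (B y)) x‖ + ‖g (B x) • fderiv ℝ (fun y => f (A y)) x‖ :=
          norm_add_le _ _
      _ ≤ Cf * (Cg' * ‖B‖) + Cg * (Cf' * ‖A‖) := by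
          gcongr
          · rw [norm_smul]
            exact mul_le_mul (by simpa using hCf _) (hgdB x) (norm_nonneg _) hCf0
          · rw [norm_smul]
            exact mul_le_mul (by simpa using hCg _) (hfdA x) (norm_nonneg _) hCg0
  · show u z * w z = _
    rw [hfrep, hgrep]
    show _ = f (A _) * g (B _)
    congr 1
    · congr 1; funext i
      show _ = Fin.append lu lw (Fin.castAdd mw i) z
      rw [Fin.append_left]
    · congr 1; funext i
      show _ = Fin.append lu lw (Fin.natAdd mu i) z
      rw [Fin.append_right]

lemma fcb1_prod {ι : Type*} (s : Finset ι) (F : ι → E → ℝ) (hF : ∀ i ∈ s, F i ∈ FCb1 E) :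
    (fun z => ∏ i ∈ s, F i z) ∈ FCb1 E := by
  classical
  induction s using Finset.induction with
  | empty => simpa using fcb1_const (E := E) 1
  | insert a t hx ih =>
    simp only [Finset.prod_insert hx]
    exact fcb1_mul (hF a (Finset.mem_insert_self a t))
      (ih fun i hi => hF i (Finset.mem_insert_of_mem hi))

end two
noncomputable section three
variable {E : Type*} [NormedAddCommGroup E] [NormedSpace ℝ E]

/-- composing a `C¹_b` function of one variable with a functional gives a cylinder function -/
lemma fcb1_comp1 (l : E →L[ℝ] ℝ) (s : ℝ → ℝ) (hs : ContDiff ℝ 1 s)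
    (Cb : ℝ) (hb : ∀ t, |s t| ≤ Cb) (Cd : ℝ) (hd : ∀ t, |deriv s t| ≤ Cd) :
    (fun z => s (l z)) ∈ FCb1 E := by
  set A : (Fin 1 → ℝ) →L[ℝ] ℝ :=
    ContinuousLinearMap.proj (R := ℝ) (φ := fun _ : Fin 1 => ℝ) 0
  refine ⟨1, fun _ => l, fun x => s (A x), hs.comp A.contDiff, ⟨Cb, fun x => hb _⟩,
    ⟨Cd * ‖A‖, fun x => ?_⟩, fun z => by simp [A]⟩
  have h : fderiv ℝ (fun y => s (A y)) x = (fderiv ℝ s (A x)).comp A := by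
    have h := fderiv_comp x ((hs.differentiable one_ne_zero) (A x)) A.differentiableAt
    rw [A.fderiv] at h
    exact h
  rw [h]
  have hnorm : ∀ t, ‖fderiv ℝ s t‖ ≤ Cd := by
    intro t
    refine ContinuousLinearMap.opNorm_le_bound _ (le_trans (abs_nonneg _) (hd t)) fun u => ?_
    have : fderiv ℝ s t u = u * deriv s t := by
      have : u = u • (1:ℝ) := by simp
      rw [this, _root_.map_smul, fderiv_apply_one_eq_deriv]
      simp [smul_eq_mul]
    rw [this, Real.norm_eq_abs, abs_mul, Real.norm_eq_abs, mul_comm]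
    exact mul_le_mul_of_nonneg_right (hd t) (abs_nonneg _)
  calc ‖(fderiv ℝ s (A x)).comp A‖ ≤ ‖fderiv ℝ s (A x)‖ * ‖A‖ :=
        ContinuousLinearMap.opNorm_comp_le _ _
    _ ≤ Cd * ‖A‖ := mul_le_mul_of_nonneg_right (hnorm _) (norm_nonneg _)

/-- the derivative of `Real.smoothTransition` is globally bounded -/
lemma smoothTransition_deriv_bound : ∃ C, ∀ t, |deriv Real.smoothTransition t| ≤ C := by
  have hc : Continuous (deriv Real.smoothTransition) :=
    (Real.smoothTransition.contDiff (n := 1)).continuous_deriv le_rfl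
  obtain ⟨C0, hC0⟩ := (isCompact_Icc (a := (-1:ℝ)) (b := 2)).exists_bound_of_continuousOn
    hc.continuousOn
  refine ⟨max C0 0, fun t => ?_⟩
  rcases le_or_gt t (-1) with h | h
  · have : deriv Real.smoothTransition t = 0 := by
      have hev : Real.smoothTransition =ᶠ[nhds t] fun _ => 0 := by
        filter_upwards [Iio_mem_nhds (show t < 0 by linarith)] with x hx
        exact Real.smoothTransition.zero_of_nonpos (le_of_lt hx)
      rw [hev.deriv_eq]
      simp
    simp [this, le_max_iff]
  rcases le_or_gt t 2 with h2 | h2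
  · have := hC0 t ⟨le_of_lt h, h2⟩
    rw [Real.norm_eq_abs] at this
    exact le_trans this (le_max_left _ _)
  · have : deriv Real.smoothTransition t = 0 := by
      have hev : Real.smoothTransition =ᶠ[nhds t] fun _ => 1 := by
        filter_upwards [Ioi_mem_nhds (show (1:ℝ) < t by linarith)] with x hx
        exact Real.smoothTransition.one_of_one_le (le_of_lt hx)
      rw [hev.deriv_eq]
      simp
    simp [this, le_max_iff]

/-- product rule for directional derivatives of cylinder functions -/
lemma dirDeriv_mul {u w : E → ℝ} (hu : u ∈ FCb1 E) (hw : w ∈ FCb1 E) (v z : E) :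
    dirDeriv (fun z => u z * w z) v z
      = u z * dirDeriv w v z + w z * dirDeriv u v z := by
  obtain ⟨Du, hDu, -, -⟩ := fcb1_hasDerivAt hu
  obtain ⟨Dw, hDw, -, -⟩ := fcb1_hasDerivAt hw
  have h1 := hDu v z
  have h2 := hDw v z
  have hz : z + (0:ℝ) • v = z := by simp
  have hmul := h1.mul h2
  have : dirDeriv (fun z => u z * w z) v z = Du v z * w z + u z * Dw v z := by
    refine dirDeriv_eq_of_hasDerivAt ?_
    exact hmul.congr_deriv (by simp [hz])
  rw [this, dirDeriv_eq_of_hasDerivAt h1, dirDeriv_eq_of_hasDerivAt h2]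
  ring

end three
noncomputable section four
open TopologicalSpace

variable (E : Type*) [NormedAddCommGroup E] [NormedSpace ℝ E]

/-- the π-system of finite intersections of open half-spaces -/
def cylHalf : Set (Set E) :=
  {A | ∃ (n : ℕ) (l : Fin n → E →L[ℝ] ℝ) (a : Fin n → ℝ), A = {z | ∀ i, l i z < a i}}

variable {E}

lemma cylHalf_pi : IsPiSystem (cylHalf E) := by
  rintro A ⟨n₁, l₁, a₁, rfl⟩ B ⟨n₂, l₂, a₂, rfl⟩ -
  refine ⟨n₁ + n₂, Fin.append l₁ l₂, Fin.append a₁ a₂, ?_⟩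
  ext z
  constructor
  · rintro ⟨h1, h2⟩ i
    refine Fin.addCases (fun i => ?_) (fun i => ?_) i
    · rw [Fin.append_left, Fin.append_left]; exact h1 i
    · rw [Fin.append_right, Fin.append_right]; exact h2 i
  · intro h
    constructor
    · intro i
      have := h (Fin.castAdd n₂ i)
      rwa [Fin.append_left, Fin.append_left] at this
    · intro i
      have := h (Fin.natAdd n₁ i)
      rwa [Fin.append_right, Fin.append_right] at this

lemma halfspace_mem_cylHalf (l : E →L[ℝ] ℝ) (a : ℝ) : {z : E | l z < a} ∈ cylHalf E := by
  refine ⟨1, fun _ => l, fun _ => a, ?_⟩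
  ext z
  simp [Fin.forall_fin_one]

section gen
variable [MeasurableSpace E] [BorelSpace E] [SecondCountableTopology E]
set_option linter.unusedSectionVars false

lemma cylHalf_le_borel : MeasurableSpace.generateFrom (cylHalf E) ≤ ‹MeasurableSpace E› := by
  refine MeasurableSpace.generateFrom_le ?_
  rintro A ⟨n, l, a, rfl⟩
  have : {z : E | ∀ i, l i z < a i} = ⋂ i, (l i) ⁻¹' (Set.Iio (a i)) := by
    ext z; simp
  rw [this]
  exact MeasurableSet.iInter fun i => (l i).continuous.measurable measurableSet_Iio

lemma le_halfspace_mem (l : E →L[ℝ] ℝ) (a : ℝ) :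
    MeasurableSet[MeasurableSpace.generateFrom (cylHalf E)] {z : E | l z ≤ a} := by
  have : {z : E | l z ≤ a} = ⋂ n : ℕ, {z : E | l z < a + 1 / (n + 1)} := by
    ext z
    simp only [Set.mem_setOf_eq, Set.mem_iInter]
    constructor
    · intro h n
      have : (0:ℝ) < 1 / (n + 1) := by positivity
      linarith
    · intro h
      by_contra hc
      push_neg at hc
      obtain ⟨n, hn⟩ := exists_nat_one_div_lt (ε := l z - a) (by linarith)
      have := h n
      linarith
  rw [this]
  exact MeasurableSet.iInter fun n =>
    MeasurableSpace.measurableSet_generateFrom (halfspace_mem_cylHalf _ _)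

/-- every open set lies in the σ-algebra generated by open half-spaces -/
lemma borel_le_cylHalf : ‹MeasurableSpace E› ≤ MeasurableSpace.generateFrom (cylHalf E) := by
  -- a norming sequence of functionals
  have hex : ∀ x : E, ∃ g : E →L[ℝ] ℝ, ‖g‖ ≤ 1 ∧ g x = ‖x‖ := fun x =>
    exists_dual_vector'' ℝ x
  have : Nonempty E := ⟨0⟩
  set x : ℕ → E := TopologicalSpace.denseSeq E with hx
  have hdense : DenseRange x := TopologicalSpace.denseRange_denseSeq E
  choose f hf1 hf2 using fun n => hex (x n)
  have hnorm : ∀ (w : E) (r : ℝ), (‖w‖ ≤ r ↔ ∀ n, f n w ≤ r) := by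
    intro w r
    constructor
    · intro h n
      calc f n w ≤ |f n w| := le_abs_self _
        _ ≤ ‖f n‖ * ‖w‖ := (f n).le_opNorm w
        _ ≤ 1 * ‖w‖ := mul_le_mul_of_nonneg_right (hf1 n) (norm_nonneg w)
        _ ≤ r := by rw [one_mul]; exact h
    · intro h
      by_contra hc
      push_neg at hc
      set ε := (‖w‖ - r) / 3 with hε
      have hεpos : 0 < ε := by rw [hε]; linarith
      obtain ⟨n, hn⟩ := hdense.exists_dist_lt w hεpos
      rw [dist_comm, dist_eq_norm] at hn
      have h1 : f n (x n) = ‖x n‖ := hf2 n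
      have h2 : |f n (x n - w)| ≤ ‖x n - w‖ := by
        calc |f n (x n - w)| ≤ ‖f n‖ * ‖x n - w‖ := (f n).le_opNorm _
          _ ≤ 1 * ‖x n - w‖ := mul_le_mul_of_nonneg_right (hf1 n) (norm_nonneg _)
          _ = ‖x n - w‖ := one_mul _
      have h3 : ‖w‖ - ε ≤ ‖x n‖ := by
        have := norm_sub_norm_le w (x n)
        rw [← norm_neg (w - x n), neg_sub] at this
        linarith
      have h4 : f n w = f n (x n) - f n (x n - w) := by
        rw [map_sub]; ring
      have h5 : f n w ≥ ‖x n‖ - ‖x n - w‖ := by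
        rw [h4, h1]
        have := le_trans (le_abs_self _) h2
        linarith
      have := h n
      have : f n w ≥ (‖w‖ - ε) - ε := by linarith
      have hr : r = ‖w‖ - 3 * ε := by rw [hε]; ring
      linarith
  have hball : ∀ (y : E) (r : ℝ),
      MeasurableSet[MeasurableSpace.generateFrom (cylHalf E)] (Metric.closedBall y r) := by
    intro y r
    have : Metric.closedBall y r = ⋂ n, {z : E | f n z ≤ r + f n y} := by
      ext z
      rw [Metric.mem_closedBall, dist_eq_norm, Set.mem_iInter]
      rw [hnorm (z - y) r]
      constructor
      · intro h n
        have := h n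
        rw [map_sub] at this
        simpa [Set.mem_setOf_eq] using by linarith
      · intro h n
        have := h n
        rw [map_sub]
        simp only [Set.mem_setOf_eq] at this
        linarith
    rw [this]
    exact MeasurableSet.iInter fun n => le_halfspace_mem _ _
  -- every open set is a countable union of closed balls
  rw [BorelSpace.measurable_eq (α := E)]
  refine MeasurableSpace.generateFrom_le ?_
  intro U hU
  have hUB : U = ⋃ n : ℕ, ⋃ q : ℚ, ⋃ (_ : 0 ≤ (q:ℝ) ∧ Metric.closedBall (x n) (q:ℝ) ⊆ U),
      Metric.closedBall (x n) (q:ℝ) := by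
    apply Set.Subset.antisymm
    · intro z hz
      obtain ⟨ε, hεpos, hball⟩ := Metric.isOpen_iff.1 hU z hz
      obtain ⟨n, hn⟩ := hdense.exists_dist_lt z (show 0 < ε/4 by linarith)
      obtain ⟨q, hq1, hq2⟩ := exists_rat_btwn (show ε/4 < ε/3 by linarith)
      have hq0 : 0 ≤ (q:ℝ) := by linarith
      have hsub : Metric.closedBall (x n) (q:ℝ) ⊆ U := by
        intro w hw
        rw [Metric.mem_closedBall] at hw
        apply hball
        rw [Metric.mem_ball]
        calc dist w z ≤ dist w (x n) + dist (x n) z := dist_triangle _ _ _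
          _ ≤ (q:ℝ) + ε/4 := by
              have := dist_comm z (x n) ▸ hn
              exact add_le_add hw (le_of_lt this)
          _ < ε/3 + ε/4 := by linarith
          _ ≤ ε := by linarith
      refine Set.mem_iUnion.2 ⟨n, Set.mem_iUnion.2 ⟨q, Set.mem_iUnion.2 ⟨⟨hq0, hsub⟩, ?_⟩⟩⟩
      rw [Metric.mem_closedBall]
      have : dist z (x n) < (q:ℝ) := lt_trans hn hq1
      exact le_of_lt this
    · refine Set.iUnion_subset fun n => Set.iUnion_subset fun q => Set.iUnion_subset fun h => h.2
  rw [hUB]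
  exact MeasurableSet.iUnion fun n => MeasurableSet.iUnion fun q =>
    MeasurableSet.iUnion fun _ => hball _ _

lemma borel_eq_cylHalf : ‹MeasurableSpace E› = MeasurableSpace.generateFrom (cylHalf E) :=
  le_antisymm borel_le_cylHalf cylHalf_le_borel

end gen
end four
noncomputable section five
variable {E : Type*} [NormedAddCommGroup E] [NormedSpace ℝ E]
  [MeasurableSpace E] [BorelSpace E] [SecondCountableTopology E]

/-- the transition factor `z ↦ smoothTransition (k (a - l z))` is a cylinder function -/
lemma fcb1_transition (l : E →L[ℝ] ℝ) (a : ℝ) (k : ℕ) :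
    (fun z => Real.smoothTransition ((k:ℝ) * (a - l z))) ∈ FCb1 E := by
  obtain ⟨C, hC⟩ := smoothTransition_deriv_bound
  have hCnn : 0 ≤ C := le_trans (abs_nonneg _) (hC 0)
  set s : ℝ → ℝ := fun t => Real.smoothTransition ((k:ℝ) * (a - t)) with hs
  have haff : ContDiff ℝ 1 (fun t : ℝ => (k:ℝ) * (a - t)) :=
    contDiff_const.mul (contDiff_const.sub contDiff_id)
  have hsc : ContDiff ℝ 1 s := (Real.smoothTransition.contDiff (n := 1)).comp haff
  have hsd : ∀ t, |deriv s t| ≤ C * k := by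
    intro t
    have hd1 : DifferentiableAt ℝ Real.smoothTransition ((k:ℝ) * (a - t)) :=
      ((Real.smoothTransition.contDiff (n := 1)).differentiable (by simp)).differentiableAt
    have hd2 : DifferentiableAt ℝ (fun t : ℝ => (k:ℝ) * (a - t)) t :=
      ((haff.differentiable one_ne_zero)).differentiableAt
    have : deriv s t = deriv Real.smoothTransition ((k:ℝ) * (a - t)) *
        deriv (fun t : ℝ => (k:ℝ) * (a - t)) t := by have h := deriv_comp t hd1 hd2; exact h
    rw [this]
    have hder : deriv (fun t : ℝ => (k:ℝ) * (a - t)) t = -k := by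
      have : (fun t : ℝ => (k:ℝ) * (a - t)) = fun t : ℝ => (k:ℝ) * a - (k:ℝ) * t := by
        funext t; ring
      rw [this]
      have hd : HasDerivAt (fun t : ℝ => (k:ℝ) * a - (k:ℝ) * t) (-(k:ℝ)) t := by
        have h := (hasDerivAt_mul_const (x := t) ((k:ℝ))).const_sub ((k:ℝ) * a)
        simpa [mul_comm] using h
      exact hd.deriv
    rw [hder, abs_mul]
    simp only [abs_neg, Nat.abs_cast]
    exact mul_le_mul_of_nonneg_right (hC _) (Nat.cast_nonneg k)
  exact fcb1_comp1 l s hsc 1 (fun t => by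
      rw [abs_of_nonneg (Real.smoothTransition.nonneg _)]
      exact Real.smoothTransition.le_one _) (C * k) hsd

/-- two finite measures agreeing on all `C¹` cylinder functions are equal -/
lemma fcb1_measure_ext (m m' : Measure E) [IsFiniteMeasure m] [IsFiniteMeasure m']
    (h : ∀ g ∈ FCb1 E, ∫ z, g z ∂m = ∫ z, g z ∂m') : m = m' := by
  refine MeasureTheory.ext_of_generate_finite (cylHalf E) borel_eq_cylHalf cylHalf_pi ?_ ?_
  · rintro A ⟨n, l, a, rfl⟩
    set A := {z : E | ∀ i, l i z < a i} with hA
    have hAmeas : MeasurableSet A := by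
      have : A = ⋂ i, (l i) ⁻¹' (Set.Iio (a i)) := by ext z; simp [hA]
      rw [this]
      exact MeasurableSet.iInter fun i => (l i).continuous.measurable measurableSet_Iio
    set g : ℕ → E → ℝ := fun k z => ∏ i, Real.smoothTransition ((k:ℝ) * (a i - l i z)) with hg
    have hgF : ∀ k, g k ∈ FCb1 E := fun k =>
      fcb1_prod Finset.univ _ (fun i _ => fcb1_transition (l i) (a i) k)
    have hgbd : ∀ k z, |g k z| ≤ 1 := by
      intro k z
      rw [hg, abs_of_nonneg (Finset.prod_nonneg fun i _ => Real.smoothTransition.nonneg _)]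
      exact Finset.prod_le_one (fun i _ => Real.smoothTransition.nonneg _)
        (fun i _ => Real.smoothTransition.le_one _)
    have hgtend : ∀ z, Tendsto (fun k => g k z) atTop (nhds (A.indicator (fun _ => (1:ℝ)) z)) := by
      intro z
      by_cases hz : z ∈ A
      · have h1 : ∀ i : Fin n, ∃ K : ℕ, ∀ k ≥ K, (1:ℝ) ≤ (k:ℝ) * (a i - l i z) := by
          intro i
          have hgap : 0 < a i - l i z := by have := hz i; linarith
          obtain ⟨K, hK⟩ := exists_nat_gt (1 / (a i - l i z))
          refine ⟨K, fun k hk => ?_⟩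
          have : 1 / (a i - l i z) < (k:ℝ) := lt_of_lt_of_le hK (by exact_mod_cast hk)
          rw [div_lt_iff₀ hgap] at this
          linarith
        choose K hK using h1
        set Kmax := Finset.univ.sup K with hKmax
        have hconst : ∀ k ≥ Kmax, g k z = 1 := by
          intro k hk
          rw [hg]
          refine Finset.prod_eq_one fun i _ => ?_
          refine Real.smoothTransition.one_of_one_le (hK i k ?_)
          exact le_trans (Finset.le_sup (Finset.mem_univ i)) hk
        rw [Set.indicator_of_mem hz]
        refine Tendsto.congr' ?_ tendsto_const_nhds
        filter_upwards [eventually_ge_atTop Kmax] with k hk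
        exact (hconst k hk).symm
      · rw [Set.indicator_of_notMem hz]
        simp only [hA, Set.mem_setOf_eq, not_forall, not_lt] at hz
        obtain ⟨i, hi⟩ := hz
        have hzero : ∀ k : ℕ, g k z = 0 := by
          intro k
          rw [hg]
          refine Finset.prod_eq_zero (Finset.mem_univ i) ?_
          refine Real.smoothTransition.zero_of_nonpos ?_
          exact mul_nonpos_of_nonneg_of_nonpos (Nat.cast_nonneg k) (by linarith)
        refine Tendsto.congr (fun k => (hzero k).symm) tendsto_const_nhds
    have key : ∀ (ν : Measure E), IsFiniteMeasure ν →
        Tendsto (fun k => ∫ z, g k z ∂ν) atTop (nhds ((ν A).toReal)) := by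
      intro ν hν
      have := tendsto_integral_of_dominated_convergence (μ := ν)
        (F := fun k z => g k z) (f := A.indicator fun _ => (1:ℝ)) (bound := fun _ => 1)
        (fun k => ((fcb1_continuous (hgF k)).aestronglyMeasurable))
        (integrable_const 1)
        (fun k => Filter.Eventually.of_forall fun z => by
          rw [Real.norm_eq_abs]; exact hgbd k z)
        (Filter.Eventually.of_forall hgtend)
      rwa [integral_indicator_const (1:ℝ) hAmeas, smul_eq_mul, mul_one] at this
    have h1 := key m inferInstance
    have h2 := key m' inferInstance
    have heq : ∀ k, ∫ z, g k z ∂m = ∫ z, g k z ∂m' := fun k => h (g k) (hgF k)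
    have : (m A).toReal = (m' A).toReal :=
      tendsto_nhds_unique (Tendsto.congr (fun k => heq k) h1) h2
    exact (ENNReal.toReal_eq_toReal_iff' (measure_ne_top m A) (measure_ne_top m' A)).1 this
  · have h1 := h (fun _ => (1:ℝ)) (fcb1_const 1)
    simp only [integral_const, smul_eq_mul, mul_one] at h1
    exact (ENNReal.toReal_eq_toReal_iff' (measure_ne_top m _) (measure_ne_top m' _)).1 h1

end five

noncomputable section defs
def IsLogDeriv {E : Type*} [NormedAddCommGroup E] [NormedSpace ℝ E] [MeasurableSpace E]
    (μ : Measure E) (v : E) (β : E → ℝ) : Prop :=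
  Integrable β μ ∧ ∀ φ ∈ FCb1 E, ∫ z, dirDeriv φ v z ∂μ = -∫ z, φ z * β z ∂μ

/-- `v ∈ H(μ)` : `μ` is Fomin-differentiable along `v` with square-integrable
logarithmic derivative. -/
def MemHmu {E : Type*} [NormedAddCommGroup E] [NormedSpace ℝ E] [MeasurableSpace E]
    (μ : Measure E) (v : E) : Prop :=
  ∃ β : E → ℝ, IsLogDeriv μ v β ∧ MemLp β 2 μ

/-- Hypothesis 2.2: `Q` is a bounded symmetric nonnegative operator on `H` with nonnegative
symmetric square root `sqrtQ`, `Q^{1/2}(H) ⊆ H(μ)` (with chosen logarithmic derivatives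
`β h ∈ L²(μ)` for `h ∈ Q^{1/2}(H)`), and there is an orthonormal basis `e : ℕ → H` of `H`
consisting of elements of `E*` which are eigenvectors of `Q` with eigenvalues `lam j > 0`.
Here `ι : H →L[ℝ] E` is the embedding of `H` into `E`. -/
structure Hyp22 {E H : Type*} [NormedAddCommGroup E] [NormedSpace ℝ E] [MeasurableSpace E]
    [NormedAddCommGroup H] [InnerProductSpace ℝ H]
    (μ : Measure E) (ι : H →L[ℝ] E) (Q sqrtQ : H →L[ℝ] H)
    (e : ℕ → H) (lam : ℕ → ℝ) (β : H → E → ℝ) : Prop where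
  Q_symm : ∀ x y : H, ⟪Q x, y⟫ = ⟪x, Q y⟫
  Q_nonneg : ∀ x : H, 0 ≤ ⟪Q x, x⟫
  sqrtQ_symm : ∀ x y : H, ⟪sqrtQ x, y⟫ = ⟪x, sqrtQ y⟫
  sqrtQ_nonneg : ∀ x : H, 0 ≤ ⟪sqrtQ x, x⟫
  sqrtQ_sq : ∀ x : H, sqrtQ (sqrtQ x) = Q x
  ortho : Orthonormal ℝ e
  total : (Submodule.span ℝ (Set.range e)).topologicalClosure = ⊤
  basis_in_dual : ∀ j : ℕ, ∃ l : E →L[ℝ] ℝ, ∀ h : H, ⟪e j, h⟫ = l (ι h)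
  lam_pos : ∀ j, 0 < lam j
  eigen : ∀ j, Q (e j) = lam j • e j
  logDeriv : ∀ h ∈ Set.range sqrtQ, IsLogDeriv μ (ι h) (β h)
  logDeriv_L2 : ∀ h ∈ Set.range sqrtQ, MemLp (β h) 2 μ

/-- `x ∈ H₁`, where `H₁ = {x ∈ H : ∑ c_j² ⟨x,e_j⟩² < ∞}`. -/
def memH1 {H : Type*} [NormedAddCommGroup H] [InnerProductSpace ℝ H]
    (c : ℕ → ℝ) (e : ℕ → H) (x : H) : Prop :=
  Summable fun j => (c j) ^ 2 * ⟪x, e j⟫ ^ 2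

/-- The square of the `H₁`-norm, `‖x‖_{H₁}² = ∑ c_j² ⟨x,e_j⟩²`. -/
def normH1sq {H : Type*} [NormedAddCommGroup H] [InnerProductSpace ℝ H]
    (c : ℕ → ℝ) (e : ℕ → H) (x : H) : ℝ :=
  ∑' j, (c j) ^ 2 * ⟪x, e j⟫ ^ 2

/-- The `H₁`-inner product `⟨x,y⟩_{H₁} = ∑ c_j² ⟨x,e_j⟩⟨y,e_j⟩`. -/
def innerH1 {H : Type*} [NormedAddCommGroup H] [InnerProductSpace ℝ H]
    (c : ℕ → ℝ) (e : ℕ → H) (x y : H) : ℝ :=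
  ∑' j, (c j) ^ 2 * (⟪x, e j⟫ * ⟪y, e j⟫)

/-- The squared `H₁*`-norm of an element of `H₁*` given by its coefficients `b j`
with respect to the orthonormal basis `{c_j e_j}` of `H₁*`. -/
def normH1starSq (b : ℕ → ℝ) : ℝ := ∑' j, (b j) ^ 2

/-- The dual pairing `_{H₁}⟨x, σ⟩_{H₁*}` of `x ∈ H₁` with the element `σ ∈ H₁*` whose
coefficients with respect to the orthonormal basis `{c_j e_j}` of `H₁*` are `b j`;
since the pairing extends the inner product of `H`, it equals `∑ b_j c_j ⟨x, e_j⟩`. -/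
def pairH1 {H : Type*} [NormedAddCommGroup H] [InnerProductSpace ℝ H]
    (c : ℕ → ℝ) (e : ℕ → H) (x : H) (b : ℕ → ℝ) : ℝ :=
  ∑' j, b j * (c j * ⟪x, e j⟫)

/-- `ψ` is a version of `D*G` for the vector field `G z = ∑ j, g j z • lv j`, i.e.
`∫ ψ f dμ = ∫ ⟨G, Df⟩ dμ` for all `f ∈ 𝓕C_b¹` (note `⟨G z, Df z⟩ = ∑ j g_j(z) ∂f/∂(lv j)(z)`). -/
def IsDstar {E H : Type*} [NormedAddCommGroup E] [NormedSpace ℝ E] [MeasurableSpace E]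
    [NormedAddCommGroup H] [InnerProductSpace ℝ H]
    (μ : Measure E) (ι : H →L[ℝ] E) {m : ℕ}
    (g : Fin m → E → ℝ) (lv : Fin m → H) (ψ : E → ℝ) : Prop :=
  Integrable ψ μ ∧
    ∀ f ∈ FCb1 E, ∫ z, ψ z * f z ∂μ = ∫ z, ∑ j, g j z * dirDeriv f (ι (lv j)) z ∂μ

/-- The set of numbers `∫ D*G ρ dμ` over test vector fields
`G ∈ (𝓕C_b¹)_{Q^{1/2}(H)∩H₁}` with `‖G(z)‖_{H₁} ≤ 1` for all `z`. -/
def Vset {E H : Type*} [NormedAddCommGroup E] [NormedSpace ℝ E] [MeasurableSpace E]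
    [NormedAddCommGroup H] [InnerProductSpace ℝ H]
    (μ : Measure E) (ι : H →L[ℝ] E) (sqrtQ : H →L[ℝ] H) (c : ℕ → ℝ) (e : ℕ → H)
    (ρ : E → ℝ) : Set ℝ :=
  {r | ∃ (m : ℕ) (g : Fin m → E → ℝ) (lv : Fin m → H) (ψ : E → ℝ),
      (∀ j, g j ∈ FCb1 E) ∧ (∀ j, lv j ∈ Set.range sqrtQ) ∧ (∀ j, memH1 c e (lv j)) ∧
      (∀ z, normH1sq c e (∑ j, g j z • lv j) ≤ 1) ∧
      IsDstar μ ι g lv ψ ∧ r = ∫ z, ψ z * ρ z ∂μ}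

/-- `V(ρ)`, the total variation of `ρ`. -/
def Vtotal {E H : Type*} [NormedAddCommGroup E] [NormedSpace ℝ E] [MeasurableSpace E]
    [NormedAddCommGroup H] [InnerProductSpace ℝ H]
    (μ : Measure E) (ι : H →L[ℝ] E) (sqrtQ : H →L[ℝ] H) (c : ℕ → ℝ) (e : ℕ → H)
    (ρ : E → ℝ) : ℝ :=
  sSup (Vset μ ι sqrtQ c e ρ)

/-- `ρ ∈ BV(H, H₁)` : `ρ ∈ L²(E,μ)` and `V(ρ) < ∞`. -/
def IsBV {E H : Type*} [NormedAddCommGroup E] [NormedSpace ℝ E] [MeasurableSpace E]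
    [NormedAddCommGroup H] [InnerProductSpace ℝ H]
    (μ : Measure E) (ι : H →L[ℝ] E) (sqrtQ : H →L[ℝ] H) (c : ℕ → ℝ) (e : ℕ → H)
    (ρ : E → ℝ) : Prop :=
  MemLp ρ 2 μ ∧ BddAbove (Vset μ ι sqrtQ c e ρ)

/-- `ρ ∈ BV_l(E)` (with `v ∈ E` the direction corresponding to `l ∈ E*`):
`|∫ ∂u/∂l ρ dμ| ≤ C ‖u‖_∞` for all `u ∈ 𝓕C_b¹`. -/
def IsBVl {E : Type*} [NormedAddCommGroup E] [NormedSpace ℝ E] [MeasurableSpace E]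
    (μ : Measure E) (v : E) (ρ : E → ℝ) : Prop :=
  ∃ C > 0, ∀ u ∈ FCb1 E, ∀ M : ℝ, (∀ z, |u z| ≤ M) →
    |∫ z, dirDeriv u v z * ρ z ∂μ| ≤ C * M

/-- Integral of `f` against a signed measure, via the Jordan decomposition. -/
def sintegral {E : Type*} [MeasurableSpace E] (ν : SignedMeasure E) (f : E → ℝ) : ℝ :=
  (∫ z, f z ∂ν.toJordanDecomposition.posPart) - ∫ z, f z ∂ν.toJordanDecomposition.negPart

/-- The topological support of a measure. -/
def msupport {E : Type*} [TopologicalSpace E] [MeasurableSpace E] (ν : Measure E) : Set E :=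
  {x | ∀ U : Set E, IsOpen U → x ∈ U → 0 < ν U}

/-- The `L²(μ)`-norm. -/
def L2norm {E : Type*} [MeasurableSpace E] (μ : Measure E) (f : E → ℝ) : ℝ :=
  Real.sqrt (∫ z, (f z) ^ 2 ∂μ)



end defs
noncomputable section six
variable {H : Type*} [NormedAddCommGroup H] [InnerProductSpace ℝ H]

/-- the square root of a nonnegative operator maps eigenvectors to eigenvectors -/
lemma sqrt_eigen (S : H →L[ℝ] H) (hnn : ∀ x : H, 0 ≤ ⟪S x, x⟫) (w : H) (lam : ℝ)
    (hlam : 0 < lam) (hSS : S (S w) = lam • w) : S w = Real.sqrt lam • w := by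
  set t := Real.sqrt lam with ht
  have htpos : 0 < t := Real.sqrt_pos.2 hlam
  have ht2 : t * t = lam := Real.mul_self_sqrt (le_of_lt hlam)
  set x := S w - t • w with hx
  have hkey : S x + t • x = 0 := by
    rw [hx, map_sub, _root_.map_smul, smul_sub, smul_smul, ht2, hSS]
    abel
  have hinner : ⟪S x, x⟫ + t * ⟪x, x⟫ = 0 := by
    have := congrArg (fun y => ⟪y, x⟫) hkey
    simpa [inner_add_left, real_inner_smul_left] using this
  have hxx : ⟪x, x⟫ ≤ 0 := by
    nlinarith [hnn x, real_inner_self_nonneg (x := x)]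
  have hx0 : x = 0 := by
    have := real_inner_self_nonneg (x := x)
    have hzero : ⟪x, x⟫ = (0:ℝ) := le_antisymm hxx this
    exact inner_self_eq_zero.1 hzero
  have := sub_eq_zero.1 (hx ▸ hx0)
  exact this

lemma eigen_mem_range (S : H →L[ℝ] H) (hnn : ∀ x : H, 0 ≤ ⟪S x, x⟫) (w : H) (lam : ℝ)
    (hlam : 0 < lam) (hSS : S (S w) = lam • w) : w ∈ Set.range S := by
  have h := sqrt_eigen S hnn w lam hlam hSS
  have htpos : 0 < Real.sqrt lam := Real.sqrt_pos.2 hlam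
  refine ⟨(Real.sqrt lam)⁻¹ • w, ?_⟩
  rw [_root_.map_smul, h, smul_smul, inv_mul_cancel₀ (ne_of_gt htpos), one_smul]

lemma memH1_basis (c : ℕ → ℝ) (e : ℕ → H) (he : Orthonormal ℝ e) (j : ℕ) :
    memH1 c e (e j) := by
  classical
  refine summable_of_ne_finset_zero (s := {j}) fun k hk => ?_
  have hk' : k ≠ j := by simpa using hk
  have : ⟪e j, e k⟫ = 0 := by
    have := orthonormal_iff_ite.1 he j k
    rw [this, if_neg (fun h => hk' h.symm)]
  simp [this]

lemma pairH1_smul_basis (c : ℕ → ℝ) (e : ℕ → H) (he : Orthonormal ℝ e) (j : ℕ) (r : ℝ)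
    (b : ℕ → ℝ) : pairH1 c e (r • e j) b = b j * (c j * r) := by
  classical
  have hterm : ∀ k, b k * (c k * ⟪r • e j, e k⟫)
      = if k = j then b j * (c j * r) else 0 := by
    intro k
    have hik := orthonormal_iff_ite.1 he j k
    rw [real_inner_smul_left, hik]
    by_cases h : k = j
    · subst h; simp
    · rw [if_neg (fun hh => h hh.symm), if_neg h]
      ring
  rw [pairH1]
  calc (∑' k, b k * (c k * ⟪r • e j, e k⟫))
      = ∑' k, if k = j then b j * (c j * r) else 0 := tsum_congr hterm
    _ = b j * (c j * r) := by
        rw [tsum_eq_single j (fun k hk => if_neg hk)]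
        simp

end six
noncomputable section seven
variable {E : Type*} [NormedAddCommGroup E] [NormedSpace ℝ E]
  [MeasurableSpace E] [OpensMeasurableSpace E]

lemma bdd_cont_integrable (μ : Measure E) [IsFiniteMeasure μ] {u : E → ℝ}
    (hc : Continuous u) (C : ℝ) (hC : ∀ z, |u z| ≤ C) : Integrable u μ :=
  Integrable.mono' (integrable_const C) hc.aestronglyMeasurable
    (Filter.Eventually.of_forall fun z => by rw [Real.norm_eq_abs]; exact hC z)

/-- integration by parts: construction of `D*(g·v)` from the logarithmic derivative -/
lemma dstar_construction (μ : Measure E) [IsFiniteMeasure μ] (v : E) (βv : E → ℝ)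
    (hlog : IsLogDeriv μ v βv) {g : E → ℝ} (hg : g ∈ FCb1 E) :
    ∃ ψ : E → ℝ, Integrable ψ μ ∧
      ∀ f ∈ FCb1 E, ∫ z, ψ z * f z ∂μ = ∫ z, g z * dirDeriv f v z ∂μ := by
  obtain ⟨Dg, hDg, hDgc, hDgb⟩ := fcb1_hasDerivAt hg
  obtain ⟨Cg, hCg⟩ := fcb1_bounded hg
  obtain ⟨Cd, hCd⟩ := hDgb v
  have hgc := fcb1_continuous hg
  have hDgeq : ∀ z, dirDeriv g v z = Dg v z := fun z => dirDeriv_eq_of_hasDerivAt (hDg v z)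
  refine ⟨fun z => -(Dg v z + g z * βv z), ?_, ?_⟩
  · refine Integrable.neg (Integrable.add ?_ ?_)
    · exact bdd_cont_integrable μ (hDgc v) Cd hCd
    · have := hlog.1.bdd_mul hgc.aestronglyMeasurable (c := Cg)
        (Filter.Eventually.of_forall fun z => by rw [Real.norm_eq_abs]; exact hCg z)
      exact this
  · intro f hf
    obtain ⟨Df, hDf, hDfc, hDfb⟩ := fcb1_hasDerivAt hf
    obtain ⟨Cf, hCf⟩ := fcb1_bounded hf
    obtain ⟨Cfd, hCfd⟩ := hDfb v
    have hfc := fcb1_continuous hf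
    have hDfeq : ∀ z, dirDeriv f v z = Df v z := fun z => dirDeriv_eq_of_hasDerivAt (hDf v z)
    have hCf0 : 0 ≤ Cf := le_trans (abs_nonneg _) (hCf (0:E))
    have hCg0 : 0 ≤ Cg := le_trans (abs_nonneg _) (hCg (0:E))
    -- integrabilities
    have h1 : Integrable (fun z => f z * Dg v z) μ :=
      bdd_cont_integrable μ (hfc.mul (hDgc v)) (Cf * Cd) fun z => by
        rw [abs_mul]
        exact mul_le_mul (hCf z) (hCd z) (abs_nonneg _) hCf0
    have h2 : Integrable (fun z => f z * g z * βv z) μ :=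
      hlog.1.bdd_mul (hfc.mul hgc).aestronglyMeasurable (c := Cf * Cg)
        (Filter.Eventually.of_forall fun z => by
          rw [Real.norm_eq_abs, abs_mul]
          exact mul_le_mul (hCf z) (hCg z) (abs_nonneg _) hCf0)
    have h3 : Integrable (fun z => g z * Df v z) μ :=
      bdd_cont_integrable μ (hgc.mul (hDfc v)) (Cg * Cfd) fun z => by
        rw [abs_mul]
        exact mul_le_mul (hCg z) (hCfd z) (abs_nonneg _) hCg0
    -- integration by parts from the logarithmic derivative
    have hlog2 := hlog.2 (fun z => f z * g z) (fcb1_mul hf hg)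
    have hpt : (fun z => dirDeriv (fun z => f z * g z) v z)
        = fun z => f z * Dg v z + g z * Df v z := by
      funext z
      rw [dirDeriv_mul hf hg v z, hDgeq z, hDfeq z]
    rw [hpt, integral_add h1 h3] at hlog2
    have lhs : ∫ z, -(Dg v z + g z * βv z) * f z ∂μ
        = -(∫ z, f z * Dg v z ∂μ) - ∫ z, f z * g z * βv z ∂μ := by
      have : (fun z => -(Dg v z + g z * βv z) * f z)
          = fun z => -((fun z => f z * Dg v z) z + (fun z => f z * g z * βv z) z) := by
        funext z; ring
      rw [this, integral_neg, integral_add h1 h2]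
      ring
    rw [lhs]
    have : ∫ z, g z * dirDeriv f v z ∂μ = ∫ z, g z * Df v z ∂μ := by
      congr 1; funext z; rw [hDfeq z]
    rw [this]
    have hrw : ∫ z, f z * g z * βv z ∂μ = ∫ z, (fun z => f z * g z) z * βv z ∂μ := rfl
    linarith [hlog2]

end seven
noncomputable section main
set_option maxHeartbeats 1000000

lemma max_split (x g : ℝ) : g * x = max x 0 * g - max (-x) 0 * g := by
  rcases le_total x 0 with h | h
  · rw [max_eq_right h, max_eq_left (neg_nonneg.2 h)]; ring
  · rw [max_eq_left h, max_eq_right (neg_nonpos.2 h)]; ring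

lemma ofReal_max_eq_coe_toNNReal (x : ℝ) :
    ENNReal.ofReal (max x 0) = ((Real.toNNReal x : ℝ≥0) : ℝ≥0∞) := by
  rw [ENNReal.ofReal]
  congr 1
  refine NNReal.coe_injective ?_
  rw [Real.coe_toNNReal', Real.coe_toNNReal', max_assoc, max_self]

/-- Theorem 3.2 (ii), uniqueness of `‖dρ‖` and `σ_ρ`. Elements of `H₁*` are
represented by their coefficient sequences with respect to the orthonormal basis `{c_j e_j}`
of `H₁*`. -/
theorem stmt3 {E H : Type*} [NormedAddCommGroup E] [NormedSpace ℝ E] [CompleteSpace E]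
    [SecondCountableTopology E] [MeasurableSpace E] [BorelSpace E]
    [NormedAddCommGroup H] [InnerProductSpace ℝ H] [CompleteSpace H]
    [SecondCountableTopology H]
    (μ : Measure E) [IsFiniteMeasure μ] (hμ0 : μ ≠ 0)
    (ι : H →L[ℝ] E) (hinj : Function.Injective ι) (hdense : DenseRange ι)
    (Q sqrtQ : H →L[ℝ] H) (e : ℕ → H) (lam : ℕ → ℝ) (β : H → E → ℝ)
    (hyp : Hyp22 μ ι Q sqrtQ e lam β)
    (c : ℕ → ℝ) (hc : ∀ j, 1 ≤ c j)
    (ρ : E → ℝ) (hρmeas : Measurable ρ) (hρnn : ∀ z, 0 ≤ ρ z)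
    (hρBV : IsBV μ ι sqrtQ c e ρ)
    (dρ dρ' : Measure E) [IsFiniteMeasure dρ] [IsFiniteMeasure dρ']
    (σ σ' : E → ℕ → ℝ)
    (hσmeas : ∀ j, Measurable fun z => σ z j) (hσ'meas : ∀ j, Measurable fun z => σ' z j)
    (hσnorm : ∀ᵐ z ∂dρ, normH1starSq (σ z) = 1)
    (hσ'norm : ∀ᵐ z ∂dρ', normH1starSq (σ' z) = 1)
    (hrepr : ∀ (m : ℕ) (g : Fin m → E → ℝ) (lv : Fin m → H) (ψ : E → ℝ),
      (∀ j, g j ∈ FCb1 E) → (∀ j, lv j ∈ Set.range sqrtQ) → (∀ j, memH1 c e (lv j)) →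
      IsDstar μ ι g lv ψ →
      ∫ z, ψ z * ρ z ∂μ = ∫ z, pairH1 c e (∑ j, g j z • lv j) (σ z) ∂dρ)
    (hrepr' : ∀ (m : ℕ) (g : Fin m → E → ℝ) (lv : Fin m → H) (ψ : E → ℝ),
      (∀ j, g j ∈ FCb1 E) → (∀ j, lv j ∈ Set.range sqrtQ) → (∀ j, memH1 c e (lv j)) →
      IsDstar μ ι g lv ψ →
      ∫ z, ψ z * ρ z ∂μ = ∫ z, pairH1 c e (∑ j, g j z • lv j) (σ' z) ∂dρ') :
    dρ = dρ' ∧ ∀ᵐ z ∂dρ, σ z = σ' z := by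
  classical
  -- basis vectors are in the range of `sqrtQ`
  have hrange : ∀ j, e j ∈ Set.range sqrtQ := fun j =>
    eigen_mem_range sqrtQ hyp.sqrtQ_nonneg (e j) (lam j) (hyp.lam_pos j)
      (by rw [hyp.sqrtQ_sq]; exact hyp.eigen j)
  -- Step 2 : the components of the vector measures agree on cylinder functions
  have step2 : ∀ j : ℕ, ∀ g ∈ FCb1 E,
      ∫ z, g z * σ z j ∂dρ = ∫ z, g z * σ' z j ∂dρ' := by
    intro j g hg
    obtain ⟨ψ, hψint, hψ⟩ :=
      dstar_construction μ (ι (e j)) (β (e j)) (hyp.logDeriv _ (hrange j)) hg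
    have hdstar : IsDstar μ ι (fun _ : Fin 1 => g) (fun _ : Fin 1 => e j) ψ := by
      refine ⟨hψint, fun f hf => ?_⟩
      rw [hψ f hf]
      congr 1
      funext z
      rw [Fin.sum_univ_one]
    have h1 := hrepr 1 (fun _ => g) (fun _ => e j) ψ (fun _ => hg) (fun _ => hrange j)
      (fun _ => memH1_basis c e hyp.ortho j) hdstar
    have h2 := hrepr' 1 (fun _ => g) (fun _ => e j) ψ (fun _ => hg) (fun _ => hrange j)
      (fun _ => memH1_basis c e hyp.ortho j) hdstar
    rw [h1] at h2
    have hpair : ∀ (τ : E → ℕ → ℝ) (z : E),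
        pairH1 c e (∑ i : Fin 1, (fun _ : Fin 1 => g) i z • (fun _ : Fin 1 => e j) i) (τ z)
          = c j * (g z * τ z j) := by
      intro τ z
      rw [Fin.sum_univ_one]
      rw [pairH1_smul_basis c e hyp.ortho j (g z) (τ z)]
      ring
    have h3 : ∫ z, c j * (g z * σ z j) ∂dρ = ∫ z, c j * (g z * σ' z j) ∂dρ' := by
      calc ∫ z, c j * (g z * σ z j) ∂dρ
          = ∫ z, pairH1 c e (∑ i : Fin 1, (fun _ : Fin 1 => g) i z • (fun _ : Fin 1 => e j) i)
              (σ z) ∂dρ := by congr 1; funext z; rw [hpair σ z]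
        _ = ∫ z, pairH1 c e (∑ i : Fin 1, (fun _ : Fin 1 => g) i z • (fun _ : Fin 1 => e j) i)
              (σ' z) ∂dρ' := h2
        _ = ∫ z, c j * (g z * σ' z j) ∂dρ' := by congr 1; funext z; rw [hpair σ' z]
    rw [integral_const_mul, integral_const_mul] at h3
    have hcj : c j ≠ 0 := by have := hc j; linarith
    exact mul_left_cancel₀ hcj h3
  -- truncations
  set τ : E → ℕ → ℝ := fun z j => max (-1) (min 1 (σ z j)) with hτdef
  set τ' : E → ℕ → ℝ := fun z j => max (-1) (min 1 (σ' z j)) with hτ'def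
  have hτmeas : ∀ j, Measurable fun z => τ z j := fun j =>
    measurable_const.max (measurable_const.min (hσmeas j))
  have hτ'meas : ∀ j, Measurable fun z => τ' z j := fun j =>
    measurable_const.max (measurable_const.min (hσ'meas j))
  have hτbd : ∀ z j, |τ z j| ≤ 1 := fun z j =>
    abs_le.2 ⟨le_max_left _ _, max_le (by norm_num) (min_le_left _ _)⟩
  have hτ'bd : ∀ z j, |τ' z j| ≤ 1 := fun z j =>
    abs_le.2 ⟨le_max_left _ _, max_le (by norm_num) (min_le_left _ _)⟩
  -- a.e. facts from the normalization
  have haeσ : ∀ᵐ z ∂dρ, (Summable fun j => σ z j ^ 2) ∧ (∑' j, σ z j ^ 2) = 1 ∧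
      ∀ j, τ z j = σ z j := by
    filter_upwards [hσnorm] with z hz
    simp only [normH1starSq] at hz
    have hsum : Summable fun j => σ z j ^ 2 := by
      by_contra hns
      rw [tsum_eq_zero_of_not_summable hns] at hz
      norm_num at hz
    refine ⟨hsum, hz, fun j => ?_⟩
    have h1 : σ z j ^ 2 ≤ 1 := by
      have := Summable.le_tsum hsum j fun k _ => sq_nonneg _
      linarith
    have habs := (sq_le_one_iff_abs_le_one (σ z j)).1 h1
    show max (-1) (min 1 (σ z j)) = σ z j
    rw [min_eq_right (abs_le.1 habs).2, max_eq_right (abs_le.1 habs).1]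
  have haeσ' : ∀ᵐ z ∂dρ', (Summable fun j => σ' z j ^ 2) ∧ (∑' j, σ' z j ^ 2) = 1 ∧
      ∀ j, τ' z j = σ' z j := by
    filter_upwards [hσ'norm] with z hz
    simp only [normH1starSq] at hz
    have hsum : Summable fun j => σ' z j ^ 2 := by
      by_contra hns
      rw [tsum_eq_zero_of_not_summable hns] at hz
      norm_num at hz
    refine ⟨hsum, hz, fun j => ?_⟩
    have h1 : σ' z j ^ 2 ≤ 1 := by
      have := Summable.le_tsum hsum j fun k _ => sq_nonneg _
      linarith
    have habs := (sq_le_one_iff_abs_le_one (σ' z j)).1 h1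
    show max (-1) (min 1 (σ' z j)) = σ' z j
    rw [min_eq_right (abs_le.1 habs).2, max_eq_right (abs_le.1 habs).1]
  have step2τ : ∀ j : ℕ, ∀ g ∈ FCb1 E,
      ∫ z, g z * τ z j ∂dρ = ∫ z, g z * τ' z j ∂dρ' := by
    intro j g hg
    have e1 : ∫ z, g z * τ z j ∂dρ = ∫ z, g z * σ z j ∂dρ := by
      refine integral_congr_ae ?_
      filter_upwards [haeσ] with z hz
      rw [hz.2.2 j]
    have e2 : ∫ z, g z * τ' z j ∂dρ' = ∫ z, g z * σ' z j ∂dρ' := by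
      refine integral_congr_ae ?_
      filter_upwards [haeσ'] with z hz
      rw [hz.2.2 j]
    rw [e1, e2]
    exact step2 j g hg
  -- Step 4: vector component measures agree
  set lm : Measure E := dρ + dρ' with hlmdef
  have hac : dρ ≪ lm := (Measure.le_add_right le_rfl).absolutelyContinuous
  have hac' : dρ' ≪ lm := (Measure.le_add_left le_rfl).absolutelyContinuous
  set p : E → ℝ≥0∞ := dρ.rnDeriv lm with hpdef
  set q : E → ℝ≥0∞ := dρ'.rnDeriv lm with hqdef
  have hdρ : lm.withDensity p = dρ := Measure.withDensity_rnDeriv_eq _ _ hac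
  have hdρ' : lm.withDensity q = dρ' := Measure.withDensity_rnDeriv_eq _ _ hac'
  have key : ∀ j : ℕ,
      (fun z => τ z j * (p z).toReal) =ᵐ[lm] fun z => τ' z j * (q z).toReal := by
    intro j
    -- the four nonnegative measures
    set m1 : Measure E := dρ.withDensity (fun z => ((Real.toNNReal (τ z j) : ℝ≥0) : ℝ≥0∞))
      with hm1
    set m2 : Measure E := dρ.withDensity (fun z => ((Real.toNNReal (-τ z j) : ℝ≥0) : ℝ≥0∞))
      with hm2
    set m1' : Measure E := dρ'.withDensity (fun z => ((Real.toNNReal (τ' z j) : ℝ≥0) : ℝ≥0∞))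
      with hm1'
    set m2' : Measure E := dρ'.withDensity (fun z => ((Real.toNNReal (-τ' z j) : ℝ≥0) : ℝ≥0∞))
      with hm2'
    have hbd1 : ∀ (x : ℝ), |x| ≤ 1 → ((Real.toNNReal x : ℝ≥0) : ℝ≥0∞) ≤ 1 := by
      intro x hx
      rw [show ((1:ℝ≥0∞)) = ((1 : ℝ≥0) : ℝ≥0∞) by norm_num, ENNReal.coe_le_coe]
      rw [show (1:ℝ≥0) = Real.toNNReal 1 by simp]
      exact Real.toNNReal_mono (le_trans (le_abs_self x) hx)
    have hfin : ∀ (ν : Measure E), IsFiniteMeasure ν → ∀ (d : E → ℝ),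
        (∀ z, |d z| ≤ 1) →
        IsFiniteMeasure (ν.withDensity (fun z => ((Real.toNNReal (d z) : ℝ≥0) : ℝ≥0∞))) := by
      intro ν hν d hd
      refine isFiniteMeasure_withDensity (ne_of_lt ?_)
      calc ∫⁻ z, ((Real.toNNReal (d z) : ℝ≥0) : ℝ≥0∞) ∂ν ≤ ∫⁻ _, 1 ∂ν :=
            lintegral_mono fun z => hbd1 _ (hd z)
        _ = ν Set.univ := by rw [lintegral_one]
        _ < ∞ := measure_lt_top ν _
    haveI i1 : IsFiniteMeasure m1 := hfin dρ inferInstance _ (fun z => hτbd z j)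
    haveI i2 : IsFiniteMeasure m2 := hfin dρ inferInstance _
      (fun z => by rw [abs_neg]; exact hτbd z j)
    haveI i1' : IsFiniteMeasure m1' := hfin dρ' inferInstance _ (fun z => hτ'bd z j)
    haveI i2' : IsFiniteMeasure m2' := hfin dρ' inferInstance _
      (fun z => by rw [abs_neg]; exact hτ'bd z j)
    -- integral identities for the with-density measures
    have hIden : ∀ (ν : Measure E), IsFiniteMeasure ν → ∀ (d : E → ℝ), Measurable d →
        ∀ g : E → ℝ, ∫ z, g z ∂(ν.withDensity (fun z => ((Real.toNNReal (d z) : ℝ≥0) : ℝ≥0∞)))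
          = ∫ z, max (d z) 0 * g z ∂ν := by
      intro ν hν d hd g
      rw [integral_withDensity_eq_integral_smul hd.real_toNNReal g]
      have hfeq : (fun z => Real.toNNReal (d z) • g z) = fun z => max (d z) 0 * g z := by
        funext z
        simp [NNReal.smul_def, Real.coe_toNNReal', smul_eq_mul]
      rw [hfeq]
    -- the two combined measures agree on cylinder functions
    have hmeq : m1 + m2' = m1' + m2 := by
      refine fcb1_measure_ext _ _ ?_
      intro g hg
      obtain ⟨Cg, hCg⟩ := fcb1_bounded hg
      have hgc := fcb1_continuous hg
      have hint : ∀ (ν : Measure E), IsFiniteMeasure ν → ∀ (d : E → ℝ), Measurable d →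
          (∀ z, |d z| ≤ 1) → Integrable (fun z => max (d z) 0 * g z) ν := by
        intro ν hν d hd hdb
        refine Integrable.bdd_mul (bdd_cont_integrable ν hgc Cg hCg)
          ((hd.max measurable_const).aestronglyMeasurable) (c := 1) (Filter.Eventually.of_forall fun z => ?_)
        rw [Real.norm_eq_abs, abs_of_nonneg (le_max_right _ _)]
        exact max_le (le_trans (le_abs_self _) (hdb z)) zero_le_one
      have hi1 : Integrable g m1 := bdd_cont_integrable m1 hgc Cg hCg
      have hi2 : Integrable g m2 := bdd_cont_integrable m2 hgc Cg hCg
      have hi1' : Integrable g m1' := bdd_cont_integrable m1' hgc Cg hCg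
      have hi2' : Integrable g m2' := bdd_cont_integrable m2' hgc Cg hCg
      rw [integral_add_measure hi1 hi2', integral_add_measure hi1' hi2]
      rw [hm1, hm2, hm1', hm2']
      rw [hIden dρ inferInstance _ (hτmeas j) g, hIden dρ' inferInstance _ (hτ'meas j) g,
        hIden dρ inferInstance (fun z => -τ z j) (hτmeas j).neg g, hIden dρ' inferInstance (fun z => -τ' z j) (hτ'meas j).neg g]
      have hsplit : ∀ (ν : Measure E), IsFiniteMeasure ν → ∀ (d : E → ℝ), Measurable d →
          (∀ z, |d z| ≤ 1) →
          ∫ z, g z * d z ∂ν = ∫ z, max (d z) 0 * g z ∂ν - ∫ z, max (-d z) 0 * g z ∂ν := by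
        intro ν hν d hd hdb
        rw [← integral_sub (hint ν hν d hd hdb)
          (hint ν hν (fun z => -d z) hd.neg (fun z => by rw [abs_neg]; exact hdb z))]
        congr 1
        funext z
        exact max_split (d z) (g z)
      have h1 := hsplit dρ inferInstance (fun z => τ z j) (hτmeas j) (fun z => hτbd z j)
      have h2 := hsplit dρ' inferInstance (fun z => τ' z j) (hτ'meas j) (fun z => hτ'bd z j)
      have h3 := step2τ j g hg
      rw [h1, h2] at h3
      linarith
    -- deduce equality of set integrals
    have hseteq : ∀ A : Set E, MeasurableSet A →
        ∫ z in A, τ z j ∂dρ = ∫ z in A, τ' z j ∂dρ' := by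
      intro A hA
      have h0 : (m1 + m2') A = (m1' + m2) A := by rw [hmeq]
      rw [Measure.add_apply, Measure.add_apply] at h0
      have hval : ∀ (ν : Measure E), IsFiniteMeasure ν → ∀ (d : E → ℝ), Measurable d →
          (∀ z, |d z| ≤ 1) →
          (ν.withDensity (fun z => ((Real.toNNReal (d z) : ℝ≥0) : ℝ≥0∞))) A
            = ENNReal.ofReal (∫ z in A, max (d z) 0 ∂ν) := by
        intro ν hν d hd hdb
        rw [withDensity_apply _ hA]
        have hint : Integrable (fun z => max (d z) 0) (ν.restrict A) := by
          refine Integrable.mono' (integrable_const 1)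
            ((hd.max measurable_const).aestronglyMeasurable) ?_
          refine Filter.Eventually.of_forall fun z => ?_
          rw [Real.norm_eq_abs, abs_of_nonneg (le_max_right _ _)]
          exact max_le (le_trans (le_abs_self _) (hdb z)) zero_le_one
        rw [ofReal_integral_eq_lintegral_ofReal hint
          (Filter.Eventually.of_forall fun z => le_max_right _ _)]
        congr 1
        funext z
        rw [ofReal_max_eq_coe_toNNReal]
      rw [hm1, hm2, hm1', hm2'] at h0
      rw [hval dρ inferInstance _ (hτmeas j) (fun z => hτbd z j),
        hval dρ' inferInstance (fun z => -τ' z j) (hτ'meas j).neg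
          (fun z => by rw [abs_neg]; exact hτ'bd z j),
        hval dρ' inferInstance _ (hτ'meas j) (fun z => hτ'bd z j),
        hval dρ inferInstance (fun z => -τ z j) (hτmeas j).neg
          (fun z => by rw [abs_neg]; exact hτbd z j)] at h0
      have hnn : ∀ (ν : Measure E) (d : E → ℝ), 0 ≤ ∫ z in A, max (d z) 0 ∂ν := fun ν d =>
        integral_nonneg fun z => le_max_right _ _
      rw [← ENNReal.ofReal_add (hnn _ _) (hnn _ _), ← ENNReal.ofReal_add (hnn _ _) (hnn _ _)]
        at h0
      have h0' := (ENNReal.ofReal_eq_ofReal_iff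
        (add_nonneg (hnn _ _) (hnn _ _)) (add_nonneg (hnn _ _) (hnn _ _))).1 h0
      -- split the truncated integrals
      have hsplit : ∀ (ν : Measure E), IsFiniteMeasure ν → ∀ (d : E → ℝ), Measurable d →
          (∀ z, |d z| ≤ 1) →
          ∫ z in A, d z ∂ν = ∫ z in A, max (d z) 0 ∂ν - ∫ z in A, max (-d z) 0 ∂ν := by
        intro ν hν d hd hdb
        have hint : ∀ (d' : E → ℝ), Measurable d' → (∀ z, |d' z| ≤ 1) →
            Integrable (fun z => max (d' z) 0) (ν.restrict A) := by
          intro d' hd' hdb'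
          refine Integrable.mono' (integrable_const 1)
            ((hd'.max measurable_const).aestronglyMeasurable) ?_
          refine Filter.Eventually.of_forall fun z => ?_
          rw [Real.norm_eq_abs, abs_of_nonneg (le_max_right _ _)]
          exact max_le (le_trans (le_abs_self _) (hdb' z)) zero_le_one
        rw [← integral_sub (hint d hd hdb)
          (hint (fun z => -d z) hd.neg (fun z => by rw [abs_neg]; exact hdb z))]
        congr 1
        funext z
        have := max_split (d z) 1
        linarith
      rw [hsplit dρ inferInstance _ (hτmeas j) (fun z => hτbd z j),
        hsplit dρ' inferInstance _ (hτ'meas j) (fun z => hτ'bd z j)]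
      linarith
    -- transfer to the dominating measure via Radon–Nikodym derivatives
    have hset2 : ∀ A : Set E, MeasurableSet A →
        ∫ z in A, τ z j * (p z).toReal ∂lm = ∫ z in A, τ' z j * (q z).toReal ∂lm := by
      intro A hA
      have h1 := setIntegral_rnDeriv_smul hac hA (f := fun z => τ z j)
      have h2 := setIntegral_rnDeriv_smul hac' hA (f := fun z => τ' z j)
      have e1 : ∫ z in A, τ z j * (p z).toReal ∂lm
          = ∫ z in A, (dρ.rnDeriv lm z).toReal • τ z j ∂lm := by
        congr 1
        funext z
        rw [smul_eq_mul, mul_comm]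
      have e2 : ∫ z in A, τ' z j * (q z).toReal ∂lm
          = ∫ z in A, (dρ'.rnDeriv lm z).toReal • τ' z j ∂lm := by
        congr 1
        funext z
        rw [smul_eq_mul, mul_comm]
      rw [e1, e2, h1, h2]
      exact hseteq A hA
    -- a.e. equality
    have hint1 : Integrable (fun z => τ z j * (p z).toReal) lm := by
      refine Integrable.bdd_mul (Measure.integrable_toReal_rnDeriv)
        ((hτmeas j).aestronglyMeasurable) (c := 1) (Filter.Eventually.of_forall fun z => ?_)
      rw [Real.norm_eq_abs]; exact hτbd z j
    have hint2 : Integrable (fun z => τ' z j * (q z).toReal) lm := by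
      refine Integrable.bdd_mul (Measure.integrable_toReal_rnDeriv)
        ((hτ'meas j).aestronglyMeasurable) (c := 1) (Filter.Eventually.of_forall fun z => ?_)
      rw [Real.norm_eq_abs]; exact hτ'bd z j
    exact ae_eq_of_forall_setIntegral_eq_of_sigmaFinite
      (fun s hs _ => hint1.integrableOn) (fun s hs _ => hint2.integrableOn)
      (fun s hs _ => hset2 s hs)
  -- Step 5 : pointwise argument
  have hkey : ∀ᵐ z ∂lm, ∀ j, τ z j * (p z).toReal = τ' z j * (q z).toReal := ae_all_iff.2 key
  have htr : ∀ᵐ z ∂lm, p z ≠ 0 → ((Summable fun j => σ z j ^ 2) ∧ (∑' j, σ z j ^ 2) = 1 ∧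
      ∀ j, τ z j = σ z j) := by
    have h := haeσ
    rw [← hdρ] at h
    exact (ae_withDensity_iff (Measure.measurable_rnDeriv _ _)).1 h
  have htr' : ∀ᵐ z ∂lm, q z ≠ 0 → ((Summable fun j => σ' z j ^ 2) ∧ (∑' j, σ' z j ^ 2) = 1 ∧
      ∀ j, τ' z j = σ' z j) := by
    have h := haeσ'
    rw [← hdρ'] at h
    exact (ae_withDensity_iff (Measure.measurable_rnDeriv _ _)).1 h
  have hplt : ∀ᵐ z ∂lm, p z < ∞ := Measure.rnDeriv_lt_top _ _
  have hqlt : ∀ᵐ z ∂lm, q z < ∞ := Measure.rnDeriv_lt_top _ _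
  have hae_main : ∀ᵐ z ∂lm, p z = q z ∧ (p z ≠ 0 → σ z = σ' z) := by
    filter_upwards [hkey, htr, htr', hplt, hqlt] with z hz1 hz2 hz3 hzp hzq
    set P := (p z).toReal with hP
    set Q := (q z).toReal with hQ
    have hPnn : 0 ≤ P := ENNReal.toReal_nonneg
    have hQnn : 0 ≤ Q := ENNReal.toReal_nonneg
    have hPne : p z ≠ 0 → P ≠ 0 := fun h => ENNReal.toReal_ne_zero.2 ⟨h, hzp.ne⟩
    have hQne : q z ≠ 0 → Q ≠ 0 := fun h => ENNReal.toReal_ne_zero.2 ⟨h, hzq.ne⟩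
    have hsumP : p z ≠ 0 → (∑' j, (τ z j * P) ^ 2) = P ^ 2 := by
      intro h
      obtain ⟨hsum, hnorm, hτσ⟩ := hz2 h
      calc (∑' j, (τ z j * P) ^ 2) = ∑' j, P ^ 2 * σ z j ^ 2 :=
            tsum_congr fun j => by rw [hτσ j]; ring
        _ = P ^ 2 * ∑' j, σ z j ^ 2 := tsum_mul_left
        _ = P ^ 2 := by rw [hnorm, mul_one]
    have hsumQ : q z ≠ 0 → (∑' j, (τ' z j * Q) ^ 2) = Q ^ 2 := by
      intro h
      obtain ⟨hsum, hnorm, hτσ⟩ := hz3 h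
      calc (∑' j, (τ' z j * Q) ^ 2) = ∑' j, Q ^ 2 * σ' z j ^ 2 :=
            tsum_congr fun j => by rw [hτσ j]; ring
        _ = Q ^ 2 * ∑' j, σ' z j ^ 2 := tsum_mul_left
        _ = Q ^ 2 := by rw [hnorm, mul_one]
    by_cases hp0 : p z = 0
    · by_cases hq0 : q z = 0
      · exact ⟨hp0.trans hq0.symm, fun h => absurd hp0 h⟩
      · exfalso
        have hQ0 : Q ≠ 0 := hQne hq0
        have hPz : P = 0 := by rw [hP, hp0]; simp
        have hz0 : ∀ j, (τ' z j * Q) ^ 2 = 0 := fun j => by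
          rw [← hz1 j, hPz, mul_zero]
          norm_num
        have : (∑' j, (τ' z j * Q) ^ 2) = 0 := by
          calc (∑' j, (τ' z j * Q) ^ 2) = ∑' _ : ℕ, (0:ℝ) := tsum_congr hz0
            _ = 0 := tsum_zero
        rw [hsumQ hq0] at this
        exact hQ0 ((pow_eq_zero_iff (two_ne_zero)).1 this)
    · by_cases hq0 : q z = 0
      · exfalso
        have hP0 : P ≠ 0 := hPne hp0
        have hQz : Q = 0 := by rw [hQ, hq0]; simp
        have hz0 : ∀ j, (τ z j * P) ^ 2 = 0 := fun j => by
          rw [hz1 j, hQz, mul_zero]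
          norm_num
        have : (∑' j, (τ z j * P) ^ 2) = 0 := by
          calc (∑' j, (τ z j * P) ^ 2) = ∑' _ : ℕ, (0:ℝ) := tsum_congr hz0
            _ = 0 := tsum_zero
        rw [hsumP hp0] at this
        exact hP0 ((pow_eq_zero_iff (two_ne_zero)).1 this)
      · have hPQ2 : P ^ 2 = Q ^ 2 := by
          rw [← hsumP hp0, ← hsumQ hq0]
          exact tsum_congr fun j => by rw [hz1 j]
        have hPQ : P = Q := by
          have := congrArg Real.sqrt hPQ2
          rwa [Real.sqrt_sq hPnn, Real.sqrt_sq hQnn] at this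
        have hpq : p z = q z := by
          refine (ENNReal.toReal_eq_toReal_iff' hzp.ne hzq.ne).1 ?_
          rw [← hP, ← hQ, hPQ]
        refine ⟨hpq, fun _ => funext fun j => ?_⟩
        obtain ⟨-, -, hτσ⟩ := hz2 hp0
        obtain ⟨-, -, hτ'σ'⟩ := hz3 hq0
        have h1 : τ z j * P = τ' z j * P := by rw [hz1 j, hPQ]
        have h2 : τ z j = τ' z j := mul_right_cancel₀ (hPne hp0) h1
        rw [← hτσ j, ← hτ'σ' j, h2]
  constructor
  · calc dρ = lm.withDensity p := hdρ.symm
      _ = lm.withDensity q := by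
          refine withDensity_congr_ae ?_
          filter_upwards [hae_main] with z hz using hz.1
      _ = dρ' := hdρ'
  · rw [← hdρ, ae_withDensity_iff (Measure.measurable_rnDeriv _ _)]
    filter_upwards [hae_main] with z hz using hz.2

end main
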